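/- arXiv:1509.02007 — 2 statements merged into one kernel-verified Lean document; each statement's English description precedes it below -/
import Mathlib

section
/- Let (α_k)_{k≥1} be nonnegative reals with K := Σ_{k≥1} α_k < 1. Define β_0 := 1 and β_k := Σ_{i=1}^k α_i β_{k−i} for k ≥ 1. Then β_k ≥ 0 for all k, and Σ_{k=0}^∞ β_k = 1/(1−K). -/
open scoped BigOperators
open Finset

private lemma icc_sum_eq (f : ℕ → ℝ) : ∀ k : ℕ, ∑ i ∈ Finset.Icc 1 k, f i = ∑ i ∈ Finset.range k, f (i + 1) := by
  intro k
  induction k with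
  | zero => simp
  | succ n ih =>
    rw [Finset.sum_Icc_succ_top (Nat.le_add_left 1 n), ih, Finset.sum_range_succ]

/-- for the renewal sequence `β_0 = 1`,
`β_k = Σ_{i=1}^k α_i β_{k-i}` built from nonnegative `α` with
`Σ_{k≥1} α_k = K < 1`, all `β_k ≥ 0` and `Σ_{k≥0} β_k = 1/(1-K)`. -/
theorem stmt1 (α : ℕ → ℝ) (hα : ∀ k, 0 ≤ α k) (K : ℝ)
    (hK : HasSum (fun k : ℕ => α (k + 1)) K) (hK1 : K < 1)
    (β : ℕ → ℝ) (hβ0 : β 0 = 1)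
    (hβ : ∀ k : ℕ, 1 ≤ k → β k = ∑ i ∈ Finset.Icc 1 k, α i * β (k - i)) :
    (∀ k, 0 ≤ β k) ∧ HasSum β (1 / (1 - K)) := by
  -- nonnegativity
  have hβpos : ∀ k, 0 ≤ β k := by
    intro k
    induction k using Nat.strong_induction_on with
    | _ k ih =>
      rcases Nat.eq_zero_or_pos k with hk | hk
      · rw [hk, hβ0]; norm_num
      · rw [hβ k hk]
        refine Finset.sum_nonneg fun i hi => ?_
        rw [Finset.mem_Icc] at hi
        exact mul_nonneg (hα i) (ih (k - i) (by omega))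
  set a : ℕ → ℝ := fun i => if i = 0 then 0 else α i with ha
  have hapos : ∀ i, 0 ≤ a i := by
    intro i; by_cases h : i = 0 <;> simp [ha, h, hα i]
  have haK : HasSum a K := by
    have h1 : HasSum (fun n => a (n + 1)) K := by simpa [ha] using hK
    have := (hasSum_nat_add_iff (f := a) 1).mp h1
    simpa [ha] using this
  -- key convolution identity
  have hconv : ∀ k : ℕ, β k = (if k = 0 then (1:ℝ) else 0)
      + ∑ p ∈ Finset.HasAntidiagonal.antidiagonal k, a p.1 * β p.2 := by
    intro k
    rcases k with _ | n
    · simp [ha, hβ0]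
    · rw [Finset.Nat.sum_antidiagonal_eq_sum_range_succ_mk, Finset.sum_range_succ',
        hβ (n + 1) (Nat.le_add_left 1 n), icc_sum_eq]
      simp [ha]
  have h1K : (0:ℝ) < 1 - K := by linarith
  -- partial sums bounded
  have hbound : ∀ N, ∑ k ∈ Finset.range N, β k ≤ 1 / (1 - K) := by
    intro N
    set S := ∑ k ∈ Finset.range N, β k with hS
    have hSpos : 0 ≤ S := Finset.sum_nonneg fun i _ => hβpos i
    have key : S ≤ 1 + K * S := by
      have hrw : S = (∑ k ∈ Finset.range N, if k = 0 then (1:ℝ) else 0)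
          + ∑ k ∈ Finset.range N, ∑ p ∈ Finset.HasAntidiagonal.antidiagonal k, a p.1 * β p.2 := by
        rw [hS, ← Finset.sum_add_distrib]
        exact Finset.sum_congr rfl fun k _ => hconv k
      have h1 : (∑ k ∈ Finset.range N, if k = 0 then (1:ℝ) else 0) ≤ 1 := by
        rcases Nat.eq_zero_or_pos N with h | h
        · simp [h]
        · rw [Finset.sum_ite_eq' (Finset.range N) 0 (fun _ => (1:ℝ))]
          simp [Finset.mem_range.mpr h]
      have hdisj : (↑(Finset.range N) : Set ℕ).PairwiseDisjoint Finset.HasAntidiagonal.antidiagonal := by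
        intro x _ y _ hxy
        simp only [Finset.disjoint_left]
        intro p hp hp'
        rw [Finset.HasAntidiagonal.mem_antidiagonal] at hp hp'
        exact hxy (hp ▸ hp')
      have h2 : ∑ k ∈ Finset.range N, ∑ p ∈ Finset.HasAntidiagonal.antidiagonal k, a p.1 * β p.2
          ≤ K * S := by
        rw [← Finset.sum_biUnion hdisj]
        have hsub : (Finset.range N).biUnion Finset.HasAntidiagonal.antidiagonal
            ⊆ Finset.range N ×ˢ Finset.range N := by
          intro p hp
          rw [Finset.mem_biUnion] at hp
          obtain ⟨k, hk, hpk⟩ := hp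
          rw [Finset.mem_range] at hk
          rw [Finset.HasAntidiagonal.mem_antidiagonal] at hpk
          rw [Finset.mem_product, Finset.mem_range, Finset.mem_range]
          omega
        calc ∑ p ∈ (Finset.range N).biUnion Finset.HasAntidiagonal.antidiagonal, a p.1 * β p.2
            ≤ ∑ p ∈ Finset.range N ×ˢ Finset.range N, a p.1 * β p.2 :=
              Finset.sum_le_sum_of_subset_of_nonneg hsub
                (fun p _ _ => mul_nonneg (hapos p.1) (hβpos p.2))
          _ = (∑ i ∈ Finset.range N, a i) * S := by
              rw [hS, Finset.sum_mul_sum, Finset.sum_product]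
          _ ≤ K * S := by
              apply mul_le_mul_of_nonneg_right _ hSpos
              exact sum_le_hasSum _ (fun i _ => hapos i) haK
      linarith [hrw ▸ add_le_add h1 h2]
    rw [le_div_iff₀ h1K]
    nlinarith
  have hsummable : Summable β := summable_of_sum_range_le hβpos hbound
  -- exact value
  have hnorma : Summable fun i => ‖a i‖ := by
    simpa [Real.norm_eq_abs, abs_of_nonneg (hapos _)] using haK.summable
  have hnormb : Summable fun i => ‖β i‖ := by
    simpa [Real.norm_eq_abs, abs_of_nonneg (hβpos _)] using hsummable
  have hcauchy : (∑' i, a i) * (∑' i, β i)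
      = ∑' k, ∑ p ∈ Finset.HasAntidiagonal.antidiagonal k, a p.1 * β p.2 :=
    tsum_mul_tsum_eq_tsum_sum_antidiagonal_of_summable_norm hnorma hnormb
  have hconvsum : Summable fun k => ∑ p ∈ Finset.HasAntidiagonal.antidiagonal k, a p.1 * β p.2 := by
    have : (fun k => ∑ p ∈ Finset.HasAntidiagonal.antidiagonal k, a p.1 * β p.2)
        = fun k => β k - (if k = 0 then (1:ℝ) else 0) := by
      funext k; rw [hconv k]; ring
    rw [this]
    exact hsummable.sub (summable_of_ne_finset_zero (s := {0}) (by intro k hk; simp at hk; simp [hk]))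
  have hdelta : HasSum (fun k : ℕ => if k = 0 then (1:ℝ) else 0) 1 :=
    hasSum_ite_eq 0 (1:ℝ)
  have hB : ∑' k, β k = 1 + K * ∑' k, β k := by
    calc ∑' k, β k = ∑' k, ((if k = 0 then (1:ℝ) else 0)
          + ∑ p ∈ Finset.HasAntidiagonal.antidiagonal k, a p.1 * β p.2) :=
          tsum_congr hconv
      _ = 1 + K * ∑' k, β k := by
          rw [Summable.tsum_add hdelta.summable hconvsum, hdelta.tsum_eq, ← hcauchy, haK.tsum_eq]
  have hBval : ∑' k, β k = 1 / (1 - K) := by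
    have := hB
    field_simp
    linarith
  exact ⟨hβpos, hBval ▸ hsummable.hasSum⟩
end

section
/- Let K ∈ (0,1), d ∈ ℕ, and let (m_i)_{i≥0} be a sequence of reals with 0 ≤ m_i ≤ (1−K)/(2K) for all i, m_i = 0 for i < 0 (extended to ℤ), and m_i ≤ exp(Σ_{k=1}^i α_k m_{i−k}) − 1 for all i > d, where α_k ≥ 0 and Σ_{k≥1} α_k = K. Then Σ_{i=0}^∞ m_i ≤ (d+1)·(1+K)/(2K). -/
open scoped BigOperators

/-- if `0 ≤ m_i ≤ (1−K)/(2K)`, `m` satisfies the recursive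
exponential inequality `m_i ≤ exp(Σ_{k=1}^i α_k m_{i−k}) − 1` for `i > d`,
with `α_k ≥ 0` summing to `K ∈ (0,1)`, then
`Σ_{i≥0} m_i ≤ (d+1)·(1+K)/(2K)`. -/
theorem stmt9 (K : ℝ) (hK0 : 0 < K) (hK1 : K < 1) (d : ℕ)
    (α : ℕ → ℝ) (hα : ∀ k, 0 ≤ α k)
    (hαsum : HasSum (fun k : ℕ => α (k + 1)) K)
    (m : ℕ → ℝ)
    (hm0 : ∀ i, 0 ≤ m i) (hm1 : ∀ i, m i ≤ (1 - K) / (2 * K))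
    (hrec : ∀ i : ℕ, d < i →
      m i ≤ Real.exp (∑ k ∈ Finset.Icc 1 i, α k * m (i - k)) - 1) :
    ∑' i : ℕ, m i ≤ (d + 1) * (1 + K) / (2 * K) := by
  set C : ℝ := (1 - K) / (2 * K) with hC
  have hC0 : 0 ≤ C := div_nonneg (by linarith) (by linarith)
  -- partial sums of α are ≤ K
  have hαpart : ∀ s : Finset ℕ, ∑ k ∈ s, α (k + 1) ≤ K :=
    fun s => sum_le_hasSum s (fun i _ => hα _) hαsum
  -- x_i ≤ (1-K)/2
  set x : ℕ → ℝ := fun i => ∑ k ∈ Finset.Icc 1 i, α k * m (i - k) with hx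
  have hx0 : ∀ i, 0 ≤ x i := fun i =>
    Finset.sum_nonneg fun k _ => mul_nonneg (hα k) (hm0 _)
  have hxle : ∀ i, x i ≤ (1 - K) / 2 := by
    intro i
    have h1 : x i ≤ ∑ k ∈ Finset.Icc 1 i, α k * C :=
      Finset.sum_le_sum fun k _ => mul_le_mul_of_nonneg_left (hm1 _) (hα k)
    have h2 : ∑ k ∈ Finset.Icc 1 i, α k = ∑ k ∈ Finset.range i, α (k + 1) := by
      rw [show Finset.Icc 1 i = Finset.Ico 1 (i + 1) by rfl,
        Finset.sum_Ico_eq_sum_range]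
      simp [add_comm]
    have h3 : ∑ k ∈ Finset.Icc 1 i, α k ≤ K := by
      rw [h2]; exact hαpart _
    calc x i ≤ (∑ k ∈ Finset.Icc 1 i, α k) * C := by
          rw [Finset.sum_mul]; exact h1
      _ ≤ K * C := mul_le_mul_of_nonneg_right h3 hC0
      _ = (1 - K) / 2 := by rw [hC]; field_simp
  -- key linear bound for i > d
  have hlin : ∀ i, d < i → m i ≤ 2 / (1 + K) * x i := by
    intro i hi
    have hxi := hxle i
    have hx1 : x i < 1 := by linarith
    have hpos : (0:ℝ) < 1 - x i := by linarith
    have hexp : Real.exp (x i) ≤ (1 - x i)⁻¹ := by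
      have h1 : 1 - x i ≤ Real.exp (-(x i)) := by
        have := Real.add_one_le_exp (-(x i)); linarith
      have h2 : Real.exp (x i) = (Real.exp (-(x i)))⁻¹ := by
        rw [Real.exp_neg, inv_inv]
      rw [h2]
      exact inv_anti₀ hpos h1
    have h3 : m i ≤ (1 - x i)⁻¹ - 1 := le_trans (hrec i hi) (by linarith)
    have h4 : (1 - x i)⁻¹ - 1 = x i / (1 - x i) := by field_simp; ring
    have h5 : x i / (1 - x i) ≤ 2 / (1 + K) * x i := by
      rw [div_le_iff₀ hpos]
      have h6 : (1 + K) / 2 ≤ 1 - x i := by linarith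
      have h7 : 2 / (1 + K) * ((1 + K) / 2) = 1 := by field_simp
      calc x i = 2 / (1 + K) * ((1 + K) / 2) * x i := by rw [h7]; ring
        _ ≤ 2 / (1 + K) * (1 - x i) * x i := by
            apply mul_le_mul_of_nonneg_right _ (hx0 i)
            apply mul_le_mul_of_nonneg_left h6
            positivity
        _ = 2 / (1 + K) * x i * (1 - x i) := by ring
    linarith
  -- double-sum bound : ∑_{i<N} x i ≤ K * ∑_{j<N} m j
  have hswap : ∀ N : ℕ, ∑ i ∈ Finset.range N, x i ≤ K * ∑ j ∈ Finset.range N, m j := by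
    intro N
    have h1 : ∀ i, x i = ∑ j ∈ Finset.range i, α (i - j) * m j := by
      intro i
      rw [hx]
      apply Finset.sum_nbij' (fun k => i - k) (fun j => i - j)
      · intro k hk; simp only [Finset.mem_Icc] at hk; simp only [Finset.mem_range]; omega
      · intro j hj; simp only [Finset.mem_range] at hj; simp only [Finset.mem_Icc]; omega
      · intro k hk; simp only [Finset.mem_Icc] at hk; omega
      · intro j hj; simp only [Finset.mem_range] at hj; omega
      · intro k hk; simp only [Finset.mem_Icc] at hk
        congr 2; omega
    have h2 : ∑ i ∈ Finset.range N, x i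
        = ∑ j ∈ Finset.range N, ∑ i ∈ Finset.Ico (j + 1) N, α (i - j) * m j := by
      simp only [h1]
      simp only [← Nat.Ico_zero_eq_range]; rw [← Finset.sum_Ico_Ico_comm' 0 N (fun j i => α (i - j) * m j)]
    rw [h2]
    have h3 : ∀ j, ∑ i ∈ Finset.Ico (j + 1) N, α (i - j) * m j ≤ K * m j := by
      intro j
      have h4 : ∑ i ∈ Finset.Ico (j + 1) N, α (i - j)
          = ∑ k ∈ Finset.range (N - (j + 1)), α (k + 1) := by
        rw [Finset.sum_Ico_eq_sum_range]
        apply Finset.sum_congr rfl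
        intro k _
        congr 1; omega
      calc ∑ i ∈ Finset.Ico (j + 1) N, α (i - j) * m j
          = (∑ i ∈ Finset.Ico (j + 1) N, α (i - j)) * m j := by rw [Finset.sum_mul]
        _ ≤ K * m j := by
            apply mul_le_mul_of_nonneg_right _ (hm0 j)
            rw [h4]; exact hαpart _
    calc ∑ j ∈ Finset.range N, ∑ i ∈ Finset.Ico (j + 1) N, α (i - j) * m j
        ≤ ∑ j ∈ Finset.range N, K * m j := Finset.sum_le_sum fun j _ => h3 j
      _ = K * ∑ j ∈ Finset.range N, m j := by rw [Finset.mul_sum]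
  -- bound partial sums of m
  have hbound : ∀ N : ℕ, ∑ i ∈ Finset.range N, m i ≤ (d + 1) * (1 + K) / (2 * K) := by
    intro N
    rcases le_or_gt N (d + 1) with hN | hN
    · calc ∑ i ∈ Finset.range N, m i ≤ ∑ i ∈ Finset.range N, C :=
            Finset.sum_le_sum fun i _ => hm1 i
        _ = N * C := by rw [Finset.sum_const, Finset.card_range]; ring
        _ ≤ (d + 1) * C := by
            apply mul_le_mul_of_nonneg_right _ hC0
            exact_mod_cast hN
        _ ≤ (d + 1) * (1 + K) / (2 * K) := by
            rw [hC, mul_div_assoc]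
            apply mul_le_mul_of_nonneg_left _ (by positivity)
            apply div_le_div_of_nonneg_right (by linarith) (by linarith)
    · set S := ∑ i ∈ Finset.range N, m i with hS
      have hsplit : S = ∑ i ∈ Finset.range (d + 1), m i + ∑ i ∈ Finset.Ico (d + 1) N, m i := by
        rw [hS, ← Nat.Ico_zero_eq_range, ← Finset.sum_Ico_consecutive m (Nat.zero_le _) hN.le,
          Nat.Ico_zero_eq_range]
      have h1 : ∑ i ∈ Finset.range (d + 1), m i ≤ (d + 1) * C := by
        calc ∑ i ∈ Finset.range (d + 1), m i ≤ ∑ i ∈ Finset.range (d + 1), C :=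
              Finset.sum_le_sum fun i _ => hm1 i
          _ = (d + 1) * C := by rw [Finset.sum_const, Finset.card_range]; push_cast; ring
      have h2 : ∑ i ∈ Finset.Ico (d + 1) N, m i
          ≤ 2 / (1 + K) * ∑ i ∈ Finset.Ico (d + 1) N, x i := by
        rw [Finset.mul_sum]
        apply Finset.sum_le_sum
        intro i hi
        simp only [Finset.mem_Ico] at hi
        exact hlin i (by omega)
      have h3 : ∑ i ∈ Finset.Ico (d + 1) N, x i ≤ ∑ i ∈ Finset.range N, x i := by
        apply Finset.sum_le_sum_of_subset_of_nonneg
        · intro i hi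
          simp only [Finset.mem_Ico] at hi; simp only [Finset.mem_range]; omega
        · intro i _ _; exact hx0 i
      have h4 : ∑ i ∈ Finset.Ico (d + 1) N, m i ≤ 2 / (1 + K) * (K * S) := by
        calc ∑ i ∈ Finset.Ico (d + 1) N, m i ≤ 2 / (1 + K) * ∑ i ∈ Finset.Ico (d + 1) N, x i := h2
          _ ≤ 2 / (1 + K) * ∑ i ∈ Finset.range N, x i := by
              apply mul_le_mul_of_nonneg_left h3; positivity
          _ ≤ 2 / (1 + K) * (K * S) := by
              apply mul_le_mul_of_nonneg_left (hswap N); positivity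
      have hSfull : S ≤ (d + 1) * C + 2 * K / (1 + K) * S := by
        have h4' : ∑ i ∈ Finset.Ico (d + 1) N, m i ≤ 2 * K / (1 + K) * S := by
          calc ∑ i ∈ Finset.Ico (d + 1) N, m i ≤ 2 / (1 + K) * (K * S) := h4
            _ = 2 * K / (1 + K) * S := by field_simp
        linarith [hsplit, h1, h4']
      -- solve for S
      have hfrac : (0:ℝ) < 1 - 2 * K / (1 + K) := by
        rw [sub_pos, div_lt_one (by linarith)]; linarith
      have hS2 : S * (1 - 2 * K / (1 + K)) ≤ (d + 1) * C := by nlinarith [hSfull]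
      have heq : (1 - 2 * K / (1 + K)) = (1 - K) / (1 + K) := by field_simp; ring
      have hgoal : S ≤ (d + 1) * (1 + K) / (2 * K) := by
        rw [heq, hC] at hS2
        have hKpos : (0:ℝ) < 1 - K := by linarith
        have h1K : (0:ℝ) < 1 + K := by linarith
        have key : S * ((1 - K) / (1 + K)) * ((1 + K) / (1 - K))
            ≤ ((d:ℝ) + 1) * ((1 - K) / (2 * K)) * ((1 + K) / (1 - K)) :=
          mul_le_mul_of_nonneg_right hS2 (by positivity)
        have e1 : S * ((1 - K) / (1 + K)) * ((1 + K) / (1 - K)) = S := by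
          field_simp
        have e2 : ((d:ℝ) + 1) * ((1 - K) / (2 * K)) * ((1 + K) / (1 - K))
            = ((d:ℝ) + 1) * (1 + K) / (2 * K) := by
          field_simp
        rw [e1, e2] at key
        exact key
      exact hgoal
  exact Real.tsum_le_of_sum_range_le hm0 hbound
end
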